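/- Fix n ≥ 1 and define W(p) = (1/(p!)^n) · Σ over all n-tuples (σ_1,…,σ_n) ∈ (S_p)^n of Σ_{q=1}^p max_{1≤i≤n} σ_i(q). Then W(p) = np²/(n+1) + p/2 + O(1) as p → ∞; that is, there exists a constant C (depending only on n) such that |W(p) − np²/(n+1) − p/2| ≤ C for all p ≥ 1. -/

import Mathlib

open Finset

section Aux

open Equiv

lemma permSumAux (m : ℕ) (q : Fin (m+1)) (c : Fin (m+1) → ℝ) :
    ∑ π : Perm (Fin (m+1)), c (π q) = (m.factorial : ℝ) * ∑ v, c v := by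
  have h1 : ∑ π : Perm (Fin (m+1)), c (π q)
      = ∑ π : Perm (Fin (m+1)), c (π 0) := by
    rw [← Equiv.sum_comp (Equiv.mulRight (Equiv.swap 0 q)) (fun π => c (π 0))]
    simp [Equiv.Perm.mul_apply]
  rw [h1, ← Equiv.sum_comp (Equiv.Perm.decomposeFin (n := m)).symm (fun π => c (π 0))]
  simp [Equiv.Perm.decomposeFin_symm_apply_zero, Fintype.sum_prod_type,
    Finset.sum_const, Fintype.card_perm, mul_comm, Finset.mul_sum]

lemma countLtAux (p k : ℕ) (hk : k ≤ p) :
    ∑ v : Fin p, (if (v : ℕ) < k then (1:ℝ) else 0) = k := by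
  rw [Fin.sum_univ_eq_sum_range (fun j => if j < k then (1:ℝ) else 0)]
  rw [← Finset.sum_filter]
  have : (Finset.range p).filter (· < k) = Finset.range k := by
    ext j; simp; omega
  simp [this]

lemma supEqIndAux (n p : ℕ) (hn : 1 ≤ n) (v : Fin n → Fin p) :
    ((Finset.univ.sup (fun i : Fin n => ((v i : ℕ)) + 1) : ℕ) : ℝ)
      = ∑ k ∈ Finset.range p, (if ∃ i, k ≤ (v i : ℕ) then (1:ℝ) else 0) := by
  have hne : (Finset.univ : Finset (Fin n)).Nonempty := by
    simpa [Finset.univ_nonempty_iff] using Fin.pos_iff_nonempty.mp hn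
  obtain ⟨i₀, -, hi₀⟩ := Finset.exists_mem_eq_sup Finset.univ hne (fun i => ((v i : ℕ)) + 1)
  rw [hi₀]
  have hmax : ∀ i, (v i : ℕ) ≤ (v i₀ : ℕ) := by
    intro i
    have h := Finset.le_sup (f := fun i : Fin n => ((v i : ℕ)) + 1) (Finset.mem_univ i)
    rw [hi₀] at h
    simpa using h
  rw [← Finset.sum_filter]
  have : (Finset.range p).filter (fun k => ∃ i, k ≤ (v i : ℕ)) = Finset.range ((v i₀ : ℕ) + 1) := by
    ext k
    simp only [Finset.mem_filter, Finset.mem_range]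
    constructor
    · rintro ⟨-, i, hi⟩; have := hmax i; omega
    · intro hk; exact ⟨lt_of_lt_of_le hk (v i₀).isLt, i₀, by omega⟩
  simp [this]

end Aux

/-- The expected utilitarian social welfare `W(p)` of the best-preference mechanism
with `n` agents, Borda utilities and independent uniformly random rankings:
`W(p) = (1/(p!)^n) · Σ_{(σ₁,…,σ_n) ∈ (S_p)^n} Σ_{q=1}^p max_{1≤i≤n} σ_i(q)`. -/
noncomputable def bestPrefWelfare (n p : ℕ) : ℝ :=
  (∑ σ : Fin n → Equiv.Perm (Fin p), ∑ q : Fin p,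
      ((Finset.univ.sup (fun i : Fin n => ((σ i q : Fin p) : ℕ) + 1) : ℕ) : ℝ))
    / ((p.factorial : ℝ) ^ n)

section Aux2

open Equiv

lemma welfareEqAux (n m : ℕ) (hn : 1 ≤ n) :
    bestPrefWelfare n (m+1) = ((m+1 : ℕ) : ℝ)^2
      - (∑ k ∈ Finset.range (m+1), (k:ℝ)^n) * ((m+1 : ℕ) : ℝ) / ((m+1 : ℕ) : ℝ)^n := by
  have key : ∀ q : Fin (m+1), ∀ k ∈ Finset.range (m+1),
      ∑ σ : Fin n → Perm (Fin (m+1)),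
          (if ∃ i, k ≤ ((σ i q : Fin (m+1)) : ℕ) then (1:ℝ) else 0)
        = ((m+1).factorial : ℝ)^n - ((m.factorial : ℝ) * k)^n := by
    intro q k hk
    have hind : ∀ v : Fin n → Fin (m+1),
        (if ∃ i, k ≤ (v i : ℕ) then (1:ℝ) else 0)
          = 1 - ∏ i, (if (v i : ℕ) < k then (1:ℝ) else 0) := by
      intro v
      by_cases h : ∃ i, k ≤ (v i : ℕ)
      · rw [if_pos h]
        obtain ⟨i, hi⟩ := h
        have hz : (∏ j : Fin n, if (v j : ℕ) < k then (1:ℝ) else 0) = 0 :=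
          Finset.prod_eq_zero (Finset.mem_univ i) (if_neg (by omega))
        rw [hz]; norm_num
      · rw [if_neg h]
        push_neg at h
        have ho : (∏ j : Fin n, if (v j : ℕ) < k then (1:ℝ) else 0) = 1 :=
          Finset.prod_eq_one (fun j _ => if_pos (h j))
        rw [ho]; norm_num
    simp only [hind]
    rw [Finset.sum_sub_distrib]
    have hcard : ∑ _σ : Fin n → Perm (Fin (m+1)), (1:ℝ) = ((m+1).factorial : ℝ)^n := by
      simp [Finset.card_univ, Fintype.card_fun, Fintype.card_perm, Fintype.card_fin]
    rw [hcard]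
    congr 1
    have hπ : ∑ π : Perm (Fin (m+1)), (if ((π q : Fin (m+1)) : ℕ) < k then (1:ℝ) else 0)
        = (m.factorial : ℝ) * k := by
      rw [permSumAux m q (fun v => if (v : ℕ) < k then (1:ℝ) else 0),
        countLtAux (m+1) k (by simpa using Nat.le_of_lt_succ (Finset.mem_range.mp hk) |>.trans (by omega))]
    rw [← Fintype.prod_sum (fun _ (π : Perm (Fin (m+1))) => if ((π q : Fin (m+1)) : ℕ) < k then (1:ℝ) else 0)]
    rw [Finset.prod_congr rfl (fun i _ => hπ)]
    simp
  unfold bestPrefWelfare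
  have hnum : (∑ σ : Fin n → Equiv.Perm (Fin (m+1)), ∑ q : Fin (m+1),
      ((Finset.univ.sup (fun i : Fin n => ((σ i q : Fin (m+1)) : ℕ) + 1) : ℕ) : ℝ))
      = ((m+1 : ℕ):ℝ) * (((m+1 : ℕ):ℝ) * ((m+1).factorial : ℝ)^n
          - (m.factorial : ℝ)^n * ∑ k ∈ Finset.range (m+1), (k:ℝ)^n) := by
    simp only [supEqIndAux n (m+1) hn]
    rw [Finset.sum_comm]
    have : ∀ q : Fin (m+1),
        (∑ σ : Fin n → Perm (Fin (m+1)), ∑ k ∈ Finset.range (m+1),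
            (if ∃ i, k ≤ ((σ i q : Fin (m+1)) : ℕ) then (1:ℝ) else 0))
          = ((m+1 : ℕ):ℝ) * ((m+1).factorial : ℝ)^n
            - (m.factorial : ℝ)^n * ∑ k ∈ Finset.range (m+1), (k:ℝ)^n := by
      intro q
      rw [Finset.sum_comm]
      rw [Finset.sum_congr rfl (key q)]
      rw [Finset.sum_sub_distrib]
      simp [Finset.mul_sum, mul_pow, mul_comm]
    rw [Finset.sum_congr rfl (fun q _ => this q)]
    simp [mul_comm]
    ring
  rw [hnum]
  have h1 : ((m+1).factorial : ℝ) = ((m+1:ℕ) : ℝ) * (m.factorial : ℝ) := by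
    push_cast [Nat.factorial_succ]; ring
  have h2 : (m.factorial : ℝ) ≠ 0 := Nat.cast_ne_zero.mpr m.factorial_ne_zero
  have h3 : ((m+1:ℕ) : ℝ) ≠ 0 := by positivity
  rw [h1, mul_pow]
  field_simp

lemma boundAux (n : ℕ) (hn : 1 ≤ n) (p : ℕ) (hp : 1 ≤ p) :
    |(p:ℝ)^2 - (∑ k ∈ Finset.range p, (k:ℝ)^n) * (p:ℝ) / (p:ℝ)^n
        - (n:ℝ)*(p:ℝ)^2/((n:ℝ)+1) - (p:ℝ)/2|
      ≤ ∑ i ∈ Finset.range (n+1),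
          |((bernoulli i : ℚ):ℝ) * (((n+1).choose i : ℕ):ℝ) / ((n:ℝ)+1)| := by
  set c : ℕ → ℝ := fun i => ((bernoulli i : ℚ):ℝ) * (((n+1).choose i : ℕ):ℝ) / ((n:ℝ)+1) with hc
  have hp1 : (1:ℝ) ≤ (p:ℝ) := by exact_mod_cast hp
  have hp0 : (0:ℝ) < (p:ℝ) := by linarith
  have hpn : (0:ℝ) < (p:ℝ)^n := by positivity
  have hn1 : ((n:ℝ)+1) ≠ 0 := by positivity
  have hS : (∑ k ∈ Finset.range p, (k:ℝ)^n)
      = ∑ i ∈ Finset.range (n+1), c i * (p:ℝ)^(n+1-i) := by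
    have h := congrArg (fun x : ℚ => (x:ℝ)) (sum_range_pow p n)
    push_cast at h
    rw [h]
    refine Finset.sum_congr rfl (fun i _ => ?_)
    simp only [hc]
    ring
  have hsplit : (∑ i ∈ Finset.range (n+1), c i * (p:ℝ)^(n+1-i))
      = c 0 * (p:ℝ)^(n+1) + c 1 * (p:ℝ)^n
        + ∑ i ∈ Finset.Ico 2 (n+1), c i * (p:ℝ)^(n+1-i) := by
    rw [Finset.range_eq_Ico, Finset.sum_eq_sum_Ico_succ_bot (by omega),
      Finset.sum_eq_sum_Ico_succ_bot (by omega)]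
    norm_num
    ring
  have hc0 : c 0 = 1 / ((n:ℝ)+1) := by simp [hc]
  have hc1 : c 1 = -(1/2) := by
    simp only [hc, bernoulli_one, Nat.choose_one_right]
    push_cast
    field_simp
  set R : ℝ := ∑ i ∈ Finset.Ico 2 (n+1), c i * (p:ℝ)^(n+1-i) with hR
  have hE : (p:ℝ)^2 - (∑ k ∈ Finset.range p, (k:ℝ)^n) * (p:ℝ) / (p:ℝ)^n
        - (n:ℝ)*(p:ℝ)^2/((n:ℝ)+1) - (p:ℝ)/2
      = -(R * (p:ℝ) / (p:ℝ)^n) := by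
    rw [hS, hsplit, hc0, hc1, pow_succ]
    field_simp
    ring
  rw [hE, abs_neg]
  have hterm : ∀ i ∈ Finset.Ico 2 (n+1),
      |c i * (p:ℝ)^(n+1-i) * (p:ℝ) / (p:ℝ)^n| ≤ |c i| := by
    intro i hi
    obtain ⟨h2, hlt⟩ := Finset.mem_Ico.mp hi
    have hfac : (p:ℝ)^(n+1-i) * (p:ℝ) / (p:ℝ)^n ≤ 1 := by
      rw [div_le_one hpn, ← pow_succ]
      exact pow_le_pow_right₀ hp1 (by omega)
    have hfac0 : (0:ℝ) ≤ (p:ℝ)^(n+1-i) * (p:ℝ) / (p:ℝ)^n := by positivity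
    calc |c i * (p:ℝ)^(n+1-i) * (p:ℝ) / (p:ℝ)^n|
        = |c i| * ((p:ℝ)^(n+1-i) * (p:ℝ) / (p:ℝ)^n) := by
          rw [abs_div, abs_mul, abs_mul, abs_of_nonneg (le_of_lt hpn),
            abs_of_nonneg (le_of_lt hp0), abs_of_nonneg (by positivity : (0:ℝ) ≤ (p:ℝ)^(n+1-i))]
          ring
      _ ≤ |c i| * 1 := mul_le_mul_of_nonneg_left hfac (abs_nonneg _)
      _ = |c i| := mul_one _
  calc |R * (p:ℝ) / (p:ℝ)^n|
      = |∑ i ∈ Finset.Ico 2 (n+1), c i * (p:ℝ)^(n+1-i) * (p:ℝ) / (p:ℝ)^n| := by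
        rw [hR, Finset.sum_mul, Finset.sum_div]
    _ ≤ ∑ i ∈ Finset.Ico 2 (n+1), |c i * (p:ℝ)^(n+1-i) * (p:ℝ) / (p:ℝ)^n| :=
        Finset.abs_sum_le_sum_abs _ _
    _ ≤ ∑ i ∈ Finset.Ico 2 (n+1), |c i| := Finset.sum_le_sum hterm
    _ ≤ ∑ i ∈ Finset.range (n+1), |c i| := by
        apply Finset.sum_le_sum_of_subset_of_nonneg
        · rw [Finset.range_eq_Ico]
          exact Finset.Ico_subset_Ico (by omega) le_rfl
        · intro i _ _; exact abs_nonneg _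

end Aux2

/-- For fixed `n ≥ 1`, `W(p) = np²/(n+1) + p/2 + O(1)`:
there is a constant `C` (depending only on `n`) with
`|W(p) − np²/(n+1) − p/2| ≤ C` for all `p ≥ 1`. -/
theorem stmt5 (n : ℕ) (hn : 1 ≤ n) :
    ∃ C : ℝ, ∀ p : ℕ, 1 ≤ p →
      |bestPrefWelfare n p - (n : ℝ) * (p : ℝ) ^ 2 / ((n : ℝ) + 1) - (p : ℝ) / 2| ≤ C := by
  refine ⟨∑ i ∈ Finset.range (n+1),
      |((bernoulli i : ℚ):ℝ) * (((n+1).choose i : ℕ):ℝ) / ((n:ℝ)+1)|, ?_⟩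
  intro p hp
  obtain ⟨m, rfl⟩ := Nat.exists_eq_succ_of_ne_zero (by omega : p ≠ 0)
  rw [welfareEqAux n m hn]
  exact boundAux n hn (m+1) (by omega)
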